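/- Let u, v : ℤ² → ℂ satisfy relations (A) and (B) at every (k,ℓ) ∈ ℤ². Then there exists a function a : ℤ² → ℂ such that for all (k,ℓ) ∈ ℤ²: a(k+1,ℓ) − a(k,ℓ) = v(k,ℓ)·(u(k+1,ℓ) − u(k,ℓ)), a(k,ℓ+1) − a(k,ℓ) = v(k,ℓ)·(u(k,ℓ+1) − u(k,ℓ)), and a(k,ℓ) − a(k+1,ℓ+1) = v(k+1,ℓ+1)·(u(k,ℓ) − u(k+1,ℓ+1)); i.e., the discrete one-form whose value on each positively oriented edge (z₁,z₂) is v(z₁)·(u(z₂) − u(z₁)) is exact on the triangular lattice. -/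

import Mathlib

noncomputable def Sz (f : ℤ → ℂ) (n : ℤ) : ℂ :=
  if 0 ≤ n then ∑ i ∈ Finset.range n.toNat, f i
  else -∑ i ∈ Finset.range (-n).toNat, f (-((i : ℤ)+1))

lemma Sz_zero (f : ℤ → ℂ) : Sz f 0 = 0 := by simp [Sz]

lemma Sz_step (f : ℤ → ℂ) (n : ℤ) : Sz f (n+1) - Sz f n = f n := by
  rcases le_or_gt 0 n with h | h
  · rw [Sz, Sz, if_pos (by linarith), if_pos h]
    have h1 : (n+1).toNat = n.toNat + 1 := by omega
    rw [h1, Finset.sum_range_succ, Int.toNat_of_nonneg h]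
    ring
  · rcases eq_or_lt_of_le (by omega : n + 1 ≤ 0) with h1 | h1
    · have hn : n = -1 := by omega
      subst hn
      norm_num [Sz, Finset.sum_range_one]
    · rw [Sz, Sz, if_neg (by omega), if_neg (by omega)]
      have h2 : (-n).toNat = (-(n+1)).toNat + 1 := by omega
      rw [h2, Finset.sum_range_succ]
      have h3 : -(((-(n+1)).toNat : ℤ) + 1) = n := by omega
      rw [h3]; ring

/-- A discrete one-form on `ℤ²` that is closed on every unit square is exact. -/
lemma exact_of_closed (h w : ℤ → ℤ → ℂ)
    (clos : ∀ k l : ℤ, h k l + w (k+1) l = w k l + h k (l+1)) :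
    ∃ a : ℤ → ℤ → ℂ, ∀ k l : ℤ,
      a (k+1) l - a k l = h k l ∧ a k (l+1) - a k l = w k l := by
  have key : ∀ k l : ℤ, Sz (fun m => w (k+1) m) l - Sz (fun m => w k m) l
      = h k l - h k 0 := by
    intro k l
    induction l using Int.induction_on with
    | zero => simp [Sz_zero]
    | succ n ih =>
        have s1 := Sz_step (fun m => w (k+1) m) n
        have s2 := Sz_step (fun m => w k m) n
        have hc := clos k n
        linear_combination ih + s1 - s2 + hc
    | pred n ih =>
        have s1 := Sz_step (fun m => w (k+1) m) (-n-1)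
        have s2 := Sz_step (fun m => w k m) (-n-1)
        have hc := clos k (-n-1)
        have e1 : (-(n:ℤ) - 1 + 1) = -n := by ring
        rw [e1] at s1 s2 hc
        linear_combination ih - s1 + s2 - hc
  refine ⟨fun k l => Sz (fun m => h m 0) k + Sz (fun m => w k m) l, fun k l => ⟨?_, ?_⟩⟩
  · have s := Sz_step (fun m => h m 0) k
    have kk := key k l
    simp only
    linear_combination s + kk
  · have s := Sz_step (fun m => w k m) l
    simp only
    linear_combination s

/-- The fgh-system in potential form: relations (A) and (B) on every
elementary cell of the triangular lattice modeled on `ℤ²`. -/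
def FghRelations (u v : ℤ → ℤ → ℂ) : Prop :=
  ∀ k l : ℤ,
    (u (k+1) l - u k l) * (v k l - v (k+1) (l+1))
      = (u (k+1) (l+1) - u (k+1) l) * (v (k+1) (l+1) - v (k+1) l) ∧
    (u (k+1) (l+1) - u k (l+1)) * (v k (l+1) - v k l)
      = (u k l - u (k+1) (l+1)) * (v k l - v (k+1) (l+1))

/-- For a solution `(u,v)` of the fgh-system, the discrete one-form whose
value on each positively oriented edge `(z₁, z₂)` is `v(z₁)·(u(z₂) − u(z₁))`
is exact. -/
theorem fgh_one_form_exact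
    (u v : ℤ → ℤ → ℂ) (huv : FghRelations u v) :
    ∃ a : ℤ → ℤ → ℂ, ∀ k l : ℤ,
      a (k+1) l - a k l = v k l * (u (k+1) l - u k l) ∧
      a k (l+1) - a k l = v k l * (u k (l+1) - u k l) ∧
      a k l - a (k+1) (l+1) = v (k+1) (l+1) * (u k l - u (k+1) (l+1)) := by
  obtain ⟨a, haw⟩ := exact_of_closed
    (fun k l => v k l * (u (k+1) l - u k l))
    (fun k l => v k l * (u k (l+1) - u k l))
    (fun k l => by
      have hA := (huv k l).1
      have hB := (huv k l).2
      linear_combination hA - hB)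
  refine ⟨a, fun k l => ⟨(haw k l).1, (haw k l).2, ?_⟩⟩
  have h1 := (haw k l).1
  have h2 := (haw (k+1) l).2
  have hA := (huv k l).1
  linear_combination -h1 - h2 - hA
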